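/- Every multiplicative right Hom-alternative algebra is Hom-power associative: for the Hom-powers defined by $x^1 = x$ and $x^n = x^{n-1}\alpha^{n-2}(x)$, one has $x^n = \alpha^{i-1}(x^{n-i})\,\alpha^{n-i-1}(x^i)$ for all $x \in A$, all $n \geq 2$, and all $1 \leq i \leq n-1$. -/

import Mathlib

def homPow {A : Type*} (mul : A → A → A) (α : A → A) (x : A) : ℕ → A
  | 0 => x
  | n + 1 => mul (homPow mul α x n) (α^[n] x)

section Aux
variable {K : Type*} [Field K] [CharZero K] {A : Type*} [AddCommGroup A] [Module K A]
    (mul : A →ₗ[K] A →ₗ[K] A) (α : A →ₗ[K] A)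

lemma hom_iter (hα : ∀ x y : A, α (mul x y) = mul (α x) (α y)) :
    ∀ (e : ℕ) (u v : A), (⇑α)^[e] (mul u v) = mul ((⇑α)^[e] u) ((⇑α)^[e] v) := by
  intro e
  induction e with
  | zero => intro u v; simp
  | succ e ih =>
    intro u v
    simp only [Function.iterate_succ_apply', ih, hα]

lemma lra (hra : ∀ x y : A, mul (mul x y) (α y) = mul (α x) (mul y y)) (y b c : A) :
    mul (mul y b) (α c) + mul (mul y c) (α b)
      = mul (α y) (mul b c) + mul (α y) (mul c b) := by
  have h := hra y (b + c)
  simp only [map_add, LinearMap.add_apply] at h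
  linear_combination (norm := module) h - hra y b - hra y c

lemma key (hα : ∀ x y : A, α (mul x y) = mul (α x) (α y))
    (hra : ∀ x y : A, mul (mul x y) (α y) = mul (α x) (mul y y)) (x : A) :
    ∀ b a : ℕ, homPow (fun u v => mul u v) (⇑α) x (a + b + 1) =
      mul ((⇑α)^[b] (homPow (fun u v => mul u v) (⇑α) x a))
          ((⇑α)^[a] (homPow (fun u v => mul u v) (⇑α) x b)) := by
  set p := homPow (fun u v => mul u v) (⇑α) x with hp
  intro b
  induction b with
  | zero =>
    intro a
    show p (a + 1) = mul (p a) ((⇑α)^[a] (p 0))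
    rfl
  | succ b ih =>
    intro a
    -- instantiate the linearized identity
    have h := lra mul α hra ((⇑α)^[b] (p a)) ((⇑α)^[a+b] x) ((⇑α)^[a] (p b))
    -- term 1: mul y B = α^[b] (p (a+1))
    have f1 : mul ((⇑α)^[b] (p a)) ((⇑α)^[a+b] x) = (⇑α)^[b] (p (a+1)) := by
      have : (⇑α)^[a+b] x = (⇑α)^[b] ((⇑α)^[a] x) := by
        rw [← Function.iterate_add_apply]; ring_nf
      rw [this, ← hom_iter mul α hα]
      rfl
    have f2 : α ((⇑α)^[a] (p b)) = (⇑α)^[a+1] (p b) := by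
      rw [Function.iterate_succ_apply']
    have f3 : mul ((⇑α)^[b] (p a)) ((⇑α)^[a] (p b)) = p (a + b + 1) := (ih a).symm
    have f4 : α ((⇑α)^[b] (p a)) = (⇑α)^[b+1] (p a) := by
      rw [Function.iterate_succ_apply']
    have f5 : mul ((⇑α)^[a+b] x) ((⇑α)^[a] (p b)) = (⇑α)^[a] (p (b+1)) := by
      have e1 : (⇑α)^[a+b] x = (⇑α)^[a] ((⇑α)^[b] x) := Function.iterate_add_apply _ _ _ _
      rw [e1, ← hom_iter mul α hα]
      congr 1
      have := (ih 0).symm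
      have h0 : p 0 = x := rfl
      simpa [h0] using this
    have f6 : mul ((⇑α)^[a] (p b)) ((⇑α)^[a+b] x) = (⇑α)^[a] (p (b+1)) := by
      have e1 : (⇑α)^[a+b] x = (⇑α)^[a] ((⇑α)^[b] x) := Function.iterate_add_apply _ _ _ _
      rw [e1, ← hom_iter mul α hα]
      rfl
    rw [f1, f2, f3, f4, f5, f6] at h
    have t1 : mul ((⇑α)^[b] (p (a+1))) ((⇑α)^[a+1] (p b)) = p (a + b + 2) := by
      have := (ih (a+1)).symm
      convert this using 2 <;> ring_nf
    have t2 : mul (p (a + b + 1)) (α ((⇑α)^[a+b] x)) = p (a + b + 2) := by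
      rw [← Function.iterate_succ_apply' (⇑α) (a+b) x]
      rfl
    rw [t1, t2] at h
    -- h : p (a+b+2) + p (a+b+2) = T + T where T is the goal RHS
    have h2 : (2 : K) • (p (a + b + 2)) = (2 : K) •
        (mul ((⇑α)^[b+1] (p a)) ((⇑α)^[a] (p (b+1)))) := by
      rw [two_smul, two_smul]; exact h
    have h3 := smul_right_injective A (two_ne_zero (α := K)) h2
    show p (a + b + 1 + 1) = _
    have : a + b + 1 + 1 = a + b + 2 := rfl
    rw [this, h3]
end Aux

theorem stmt15 {K : Type*} [Field K] [CharZero K] {A : Type*} [AddCommGroup A] [Module K A]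
    (mul : A →ₗ[K] A →ₗ[K] A) (α : A →ₗ[K] A)
    (hα : ∀ x y : A, α (mul x y) = mul (α x) (α y))
    (hra : ∀ x y : A, mul (mul x y) (α y) = mul (α x) (mul y y)) :
    ∀ (x : A) (n i : ℕ), 2 ≤ n → 1 ≤ i → i ≤ n - 1 →
      homPow (fun a b => mul a b) (⇑α) x (n - 1) =
        mul ((⇑α)^[i - 1] (homPow (fun a b => mul a b) (⇑α) x (n - i - 1)))
            ((⇑α)^[n - i - 1] (homPow (fun a b => mul a b) (⇑α) x (i - 1))) := by
  intro x n i hn hi hin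
  obtain ⟨b, rfl⟩ : ∃ b, i = b + 1 := ⟨i - 1, by omega⟩
  obtain ⟨a, rfl⟩ : ∃ a, n = a + b + 2 := ⟨n - b - 2, by omega⟩
  have e1 : a + b + 2 - 1 = a + b + 1 := by omega
  have e2 : b + 1 - 1 = b := by omega
  have e3 : a + b + 2 - (b + 1) - 1 = a := by omega
  rw [e1, e2, e3]
  exact key mul α hα hra x b a
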